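/- arXiv:1001.2940 — 2 statements merged into one kernel-verified Lean document; each statement's English description precedes it below -/
import Mathlib

section
/- For a nonzero polynomial P over the integers, the Mahler measure of P is at most the 2-norm of P (Landau's inequality), and hence at most the 1-norm of P. -/
open Polynomial

open Polynomial Finset

noncomputable def N (Q : Polynomial ℂ) : ℝ := ∑ i ∈ Q.support, ‖(Q.coeff i)‖ ^ 2

lemma N_eq_range {Q : Polynomial ℂ} {n : ℕ} (h : Q.natDegree < n) :
    N Q = ∑ i ∈ range n, ‖(Q.coeff i)‖ ^ 2 := by
  refine Finset.sum_subset (Polynomial.supp_subset_range h) ?_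
  intro i _ hi
  simp [Polynomial.notMem_support_iff.mp hi]

lemma key_pointwise (z a b : ℂ) :
    ‖(a - z * b)‖ ^ 2 - ‖(starRingEnd ℂ z * a - b)‖ ^ 2
      = (1 - ‖z‖ ^ 2) * (‖a‖ ^ 2 - ‖b‖ ^ 2) := by
  simp only [Complex.sq_norm, Complex.normSq_apply, Complex.sub_re, Complex.sub_im,
    Complex.mul_re, Complex.mul_im, Complex.conj_re, Complex.conj_im, Complex.one_re]
  ring

lemma N_X_mul (R : Polynomial ℂ) : N (X * R) = N R := by
  have hd : (X * R).natDegree < R.natDegree + 2 :=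
    lt_of_le_of_lt natDegree_mul_le (by simp [natDegree_X]; omega)
  rw [N_eq_range hd, Finset.sum_range_succ',
    N_eq_range (show R.natDegree < R.natDegree + 1 by omega)]
  simp [coeff_X_mul, Polynomial.mul_coeff_zero]

lemma N_swap (z : ℂ) (R : Polynomial ℂ) :
    N ((X - C z) * R) = N ((C (starRingEnd ℂ z) * X - 1) * R) := by
  have hdX : (X * R).natDegree < R.natDegree + 2 :=
    lt_of_le_of_lt natDegree_mul_le (by simp [natDegree_X]; omega)
  have hdR : R.natDegree < R.natDegree + 2 := by omega
  have hd1 : ((X - C z) * R).natDegree < R.natDegree + 2 :=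
    lt_of_le_of_lt natDegree_mul_le (by simp [natDegree_X_sub_C]; omega)
  have hle : (C (starRingEnd ℂ z) * X - 1).natDegree ≤ 1 :=
    le_trans (natDegree_sub_le _ _)
      (max_le ((natDegree_C_mul_le _ _).trans (by simp)) (by simp))
  have hd2 : ((C (starRingEnd ℂ z) * X - 1) * R).natDegree < R.natDegree + 2 :=
    lt_of_le_of_lt natDegree_mul_le (by omega)
  have hc1 : ∀ k, ((X - C z) * R).coeff k = (X * R).coeff k - z * R.coeff k := by
    intro k; rw [sub_mul, coeff_sub, coeff_C_mul]
  have hc2 : ∀ k, ((C (starRingEnd ℂ z) * X - 1) * R).coeff k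
      = starRingEnd ℂ z * (X * R).coeff k - R.coeff k := by
    intro k; rw [sub_mul, coeff_sub, one_mul, mul_assoc, coeff_C_mul]
  rw [N_eq_range hd1, N_eq_range hd2, ← sub_eq_zero, ← Finset.sum_sub_distrib]
  simp_rw [hc1, hc2, key_pointwise]
  rw [← Finset.mul_sum, Finset.sum_sub_distrib, ← N_eq_range hdX, ← N_eq_range hdR,
    N_X_mul, sub_self, mul_zero]

noncomputable def g (z : ℂ) : Polynomial ℂ :=
  if ‖z‖ ≤ 1 then X - C z else C (starRingEnd ℂ z) * X - 1

lemma N_swap' (z : ℂ) (R : Polynomial ℂ) : N ((X - C z) * R) = N (g z * R) := by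
  unfold g; split
  · rfl
  · exact N_swap z R

lemma N_prod_swap (s : Multiset ℂ) (R : Polynomial ℂ) :
    N ((s.map fun z => X - C z).prod * R) = N ((s.map g).prod * R) := by
  induction s using Multiset.induction_on generalizing R with
  | empty => simp
  | cons z s IH =>
    simp only [Multiset.map_cons, Multiset.prod_cons]
    calc N ((X - C z) * (s.map fun z => X - C z).prod * R)
        = N ((s.map fun z => X - C z).prod * ((X - C z) * R)) := congrArg N (by ring)
      _ = N ((s.map g).prod * ((X - C z) * R)) := IH _
      _ = N ((X - C z) * ((s.map g).prod * R)) := congrArg N (by ring)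
      _ = N (g z * ((s.map g).prod * R)) := N_swap' _ _
      _ = N (g z * (s.map g).prod * R) := congrArg N (by ring)

lemma abs_lc_g (z : ℂ) : ‖(g z).leadingCoeff‖ = max 1 (‖z‖) := by
  unfold g; split
  · next h => simp [(monic_X_sub_C z).leadingCoeff, max_eq_left h]
  · next h =>
    have hz : ‖z‖ > 1 := not_le.mp h
    have hw : (starRingEnd ℂ z) ≠ 0 := by
      intro h0
      have : z = 0 := by simpa using congrArg (starRingEnd ℂ) h0
      norm_num [this] at hz
    have heq : C (starRingEnd ℂ z) * X - 1
        = C (starRingEnd ℂ z) * (X - C (starRingEnd ℂ z)⁻¹) := by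
      rw [mul_sub, ← C_mul, mul_inv_cancel₀ hw, C_1]
    rw [heq, leadingCoeff_mul, leadingCoeff_C, (monic_X_sub_C _).leadingCoeff, mul_one,
      Complex.norm_conj, max_eq_right hz.le]

lemma lc_sq_le_N (Q : Polynomial ℂ) : ‖Q.leadingCoeff‖ ^ 2 ≤ N Q := by
  by_cases hQ : Q = 0
  · simp [hQ, N]
  · have hmem : Q.natDegree ∈ Q.support :=
      Polynomial.mem_support_iff.mpr (Polynomial.leadingCoeff_ne_zero.mpr hQ)
    exact Finset.single_le_sum (f := fun i => ‖(Q.coeff i)‖ ^ 2)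
      (fun i _ => sq_nonneg _) hmem

lemma N_C_mul (c : ℂ) (T : Polynomial ℂ) : N (C c * T) = ‖c‖ ^ 2 * N T := by
  have hd : (C c * T).natDegree < T.natDegree + 1 :=
    lt_of_le_of_lt (natDegree_C_mul_le _ _) (by omega)
  rw [N_eq_range hd, N_eq_range (show T.natDegree < T.natDegree + 1 by omega),
    Finset.mul_sum]
  refine Finset.sum_congr rfl fun i _ => ?_
  rw [coeff_C_mul, norm_mul, mul_pow]

lemma prod_max_sq_le (s : Multiset ℂ) :
    (s.map fun z => max 1 (‖z‖)).prod ^ 2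
      ≤ N ((s.map fun z => X - C z).prod) := by
  have h := N_prod_swap s 1
  rw [mul_one, mul_one] at h
  rw [h]
  have hlc : ‖((s.map g).prod).leadingCoeff‖
      = (s.map fun z => max 1 (‖z‖)).prod := by
    rw [Polynomial.leadingCoeff_multiset_prod, ← normHom_apply, map_multiset_prod, Multiset.map_map,
      Multiset.map_map]
    congr 1
    exact Multiset.map_congr rfl fun z _ => abs_lc_g z
  calc (s.map fun z => max 1 (‖z‖)).prod ^ 2
      = ‖((s.map g).prod).leadingCoeff‖ ^ 2 := by rw [hlc]
    _ ≤ N ((s.map g).prod) := lc_sq_le_N _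

/-- The 1-norm of an integer polynomial: the sum of absolute values of its coefficients. -/
noncomputable def norm1 (P : Polynomial ℤ) : ℝ :=
  ∑ i ∈ Finset.range (P.natDegree + 1), |(P.coeff i : ℝ)|

/-- The 2-norm of an integer polynomial. -/
noncomputable def norm2 (P : Polynomial ℤ) : ℝ :=
  Real.sqrt (∑ i ∈ Finset.range (P.natDegree + 1), ((P.coeff i : ℝ)) ^ 2)

/-- The Mahler measure of an integer polynomial: the absolute value of the leading
coefficient times the product of `max 1 |σ|` over all complex roots `σ`. -/
noncomputable def mahlerMeasure (P : Polynomial ℤ) : ℝ :=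
  |(P.leadingCoeff : ℝ)| *
    ((P.map (Int.castRingHom ℂ)).roots.map fun z => max 1 ‖z‖).prod

/-- Landau's inequality: for a nonzero integer polynomial `P`, the Mahler measure of `P`
is at most `‖P‖₂`, and hence at most `‖P‖₁`. -/
theorem landau_inequality (P : Polynomial ℤ) (hP : P ≠ 0) :
    mahlerMeasure P ≤ norm2 P ∧ mahlerMeasure P ≤ norm1 P := by
  have hinj : Function.Injective (Int.castRingHom ℂ) := (Int.castRingHom ℂ).injective_int
  set Q : Polynomial ℂ := P.map (Int.castRingHom ℂ) with hQdef
  have hQ : Q ≠ 0 := (Polynomial.map_ne_zero_iff hinj).mpr hP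
  have hlcQ : Q.leadingCoeff = (P.leadingCoeff : ℂ) := by
    rw [hQdef, Polynomial.leadingCoeff_map_of_injective hinj]; rfl
  have hdeg : Q.natDegree = P.natDegree := Polynomial.natDegree_map_eq_of_injective hinj P
  have hsplit : Q = C Q.leadingCoeff * (Q.roots.map fun a => X - C a).prod :=
    (C_leadingCoeff_mul_prod_multiset_X_sub_C IsAlgClosed.card_roots_eq_natDegree).symm
  -- N Q equals the square of the 2-norm of P
  have hNQ : N Q = ∑ i ∈ Finset.range (P.natDegree + 1), ((P.coeff i : ℝ)) ^ 2 := by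
    rw [N_eq_range (show Q.natDegree < P.natDegree + 1 by omega)]
    refine Finset.sum_congr rfl fun i _ => ?_
    rw [hQdef, Polynomial.coeff_map]
    show ‖((P.coeff i : ℤ) : ℂ)‖ ^ 2 = _
    rw [Complex.norm_intCast, ← Int.cast_abs]
    push_cast
    rw [sq_abs]
  -- Mahler measure squared is at most N Q
  have hMnonneg : 0 ≤ mahlerMeasure P := by
    refine mul_nonneg (abs_nonneg _) (Multiset.prod_nonneg fun x hx => ?_)
    obtain ⟨z, _, rfl⟩ := Multiset.mem_map.mp hx
    positivity
  have hM2 : mahlerMeasure P ^ 2 ≤ N Q := by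
    have h1 : N Q = ‖Q.leadingCoeff‖ ^ 2
        * N ((Q.roots.map fun a => X - C a).prod) := by
      conv_lhs => rw [hsplit]
      exact N_C_mul _ _
    have h2 := prod_max_sq_le Q.roots
    have h3 : mahlerMeasure P ^ 2 = ‖Q.leadingCoeff‖ ^ 2
        * ((Q.roots.map fun z => max 1 (‖z‖)).prod) ^ 2 := by
      rw [_root_.mahlerMeasure, mul_pow, hlcQ]
      congr 2
      rw [Complex.norm_intCast]
    rw [h3, h1]
    exact mul_le_mul_of_nonneg_left h2 (sq_nonneg _)
  have hle2 : mahlerMeasure P ≤ norm2 P := by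
    rw [norm2, ← hNQ]
    exact (Real.le_sqrt hMnonneg (Finset.sum_nonneg fun i _ => sq_nonneg _)).mpr hM2
  refine ⟨hle2, hle2.trans ?_⟩
  rw [norm2, norm1]
  have h4 : ∑ i ∈ Finset.range (P.natDegree + 1), ((P.coeff i : ℝ)) ^ 2
      ≤ (∑ i ∈ Finset.range (P.natDegree + 1), |(P.coeff i : ℝ)|) ^ 2 := by
    calc ∑ i ∈ Finset.range (P.natDegree + 1), ((P.coeff i : ℝ)) ^ 2
        = ∑ i ∈ Finset.range (P.natDegree + 1), |(P.coeff i : ℝ)| ^ 2 := by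
          simp [sq_abs]
      _ ≤ _ := Finset.sum_sq_le_sq_sum_of_nonneg fun i _ => abs_nonneg _
  calc Real.sqrt (∑ i ∈ Finset.range (P.natDegree + 1), ((P.coeff i : ℝ)) ^ 2)
      ≤ Real.sqrt ((∑ i ∈ Finset.range (P.natDegree + 1), |(P.coeff i : ℝ)|) ^ 2) :=
        Real.sqrt_le_sqrt h4
    _ = _ := Real.sqrt_sq (Finset.sum_nonneg fun i _ => abs_nonneg _)
end

section
/- If α is an algebraic number that is a root of a nonzero integer polynomial P, then the Mahler measure of α is at most ||P||₁. -/
open Polynomial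

/-- The minimal primitive integer polynomial of an algebraic number `α`: the primitive part
of the integer normalization of its minimal polynomial over `ℚ`. -/
noncomputable def intMinpoly (α : ℂ) : Polynomial ℤ :=
  (IsLocalization.integerNormalization (nonZeroDivisors ℤ) (minpoly ℚ α)).primPart

/-- The Mahler measure of an algebraic number: the Mahler measure of its minimal
(primitive integer) polynomial over `ℚ`. -/
noncomputable def mahlerAlg (α : ℂ) : ℝ := mahlerMeasure (intMinpoly α)


lemma norm_multiset_prod (m : Multiset ℂ) : ‖m.prod‖ = (m.map fun x => ‖x‖).prod :=
  map_multiset_prod (normHom : ℂ →*₀ ℝ) m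

lemma dft_coeff_bound (f : Polynomial ℂ) (k N : ℕ) (hk : k < N) (hd : f.natDegree < N)
    (B : ℝ) (hB : ∀ z : ℂ, ‖z‖ = 1 → ‖f.eval z‖ ≤ B) :
    ‖f.coeff k‖ ≤ B := by
  have hN0 : 0 < N := by omega
  set ω : ℂ := Complex.exp (2 * Real.pi * Complex.I / N) with hω
  have hprim : IsPrimitiveRoot ω N := Complex.isPrimitiveRoot_exp N (by omega)
  have hω0 : ω ≠ 0 := Complex.exp_ne_zero _
  have habs1 : ‖ω‖ = 1 := by
    have h : (2 * (Real.pi : ℂ) * Complex.I / N) = ((2 * Real.pi / N : ℝ)) * Complex.I := by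
      push_cast; ring
    rw [hω, h, Complex.norm_exp_ofReal_mul_I]
  have habs : ∀ j : ℕ, ‖ω ^ j‖ = 1 := by
    intro j; rw [norm_pow, habs1, one_pow]
  have hpowcomm : ∀ a b : ℕ, (ω ^ a) ^ b = (ω ^ b) ^ a := fun a b => by
    rw [← pow_mul, ← pow_mul, Nat.mul_comm]
  have hpowN : ∀ a : ℕ, (ω ^ a) ^ N = 1 := fun a => by
    rw [hpowcomm, hprim.pow_eq_one, one_pow]
  have key : ∑ j ∈ Finset.range N, f.eval (ω ^ j) * ((ω ^ j)⁻¹) ^ k = N * f.coeff k := by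
    have heval : ∀ j : ℕ, f.eval (ω ^ j) =
        ∑ m ∈ Finset.range N, f.coeff m * (ω ^ j) ^ m := fun j =>
      eval_eq_sum_range' hd _
    have hterm : ∀ j m : ℕ, f.coeff m * (ω ^ j) ^ m * ((ω ^ j)⁻¹) ^ k
        = f.coeff m * (ω ^ m * (ω ^ k)⁻¹) ^ j := by
      intro j m
      rw [hpowcomm j m, inv_pow, hpowcomm j k, ← inv_pow, mul_assoc, ← mul_pow]
    calc ∑ j ∈ Finset.range N, f.eval (ω ^ j) * ((ω ^ j)⁻¹) ^ k
        = ∑ j ∈ Finset.range N, ∑ m ∈ Finset.range N,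
            f.coeff m * (ω ^ m * (ω ^ k)⁻¹) ^ j := by
          refine Finset.sum_congr rfl fun j _ => ?_
          rw [heval j, Finset.sum_mul]
          exact Finset.sum_congr rfl fun m _ => hterm j m
      _ = ∑ m ∈ Finset.range N, ∑ j ∈ Finset.range N,
            f.coeff m * (ω ^ m * (ω ^ k)⁻¹) ^ j := Finset.sum_comm
      _ = ∑ m ∈ Finset.range N, (if m = k then (N : ℂ) * f.coeff m else 0) := by
          refine Finset.sum_congr rfl fun m hm => ?_
          rw [← Finset.mul_sum]
          rcases eq_or_ne m k with rfl | hmk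
          · rw [if_pos rfl, mul_inv_cancel₀ (pow_ne_zero _ hω0)]
            simp [mul_comm]
          · have hzpow : (ω ^ m * (ω ^ k)⁻¹) ^ N = 1 := by
              rw [mul_pow, hpowN m, inv_pow, hpowN k, inv_one, one_mul]
            have hzne : ω ^ m * (ω ^ k)⁻¹ ≠ 1 := by
              intro h
              rw [← div_eq_mul_inv] at h
              exact hmk (hprim.pow_inj (Finset.mem_range.1 hm) hk
                ((div_eq_one_iff_eq (pow_ne_zero _ hω0)).1 h))
            rw [geom_sum_eq hzne, hzpow, if_neg hmk]
            simp
      _ = N * f.coeff k := by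
          rw [Finset.sum_ite_eq' (Finset.range N) k]
          rw [if_pos (Finset.mem_range.2 hk)]
  have hbound : ‖∑ j ∈ Finset.range N, f.eval (ω ^ j) * ((ω ^ j)⁻¹) ^ k‖
      ≤ N * B := by
    calc ‖∑ j ∈ Finset.range N, f.eval (ω ^ j) * ((ω ^ j)⁻¹) ^ k‖
        ≤ ∑ j ∈ Finset.range N, ‖f.eval (ω ^ j) * ((ω ^ j)⁻¹) ^ k‖ :=
          norm_sum_le _ _
      _ ≤ ∑ j ∈ Finset.range N, B := by
          refine Finset.sum_le_sum fun j _ => ?_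
          rw [norm_mul, norm_pow, norm_inv, habs j]
          simpa using hB _ (habs j)
      _ = N * B := by simp [mul_comm]
  rw [key, norm_mul, Complex.norm_natCast] at hbound
  have hNpos : (0:ℝ) < N := by exact_mod_cast hN0
  exact le_of_mul_le_mul_left hbound hNpos

lemma eval_circle_le_norm1 (P : Polynomial ℤ) (z : ℂ) (hz : ‖z‖ = 1) :
    ‖(P.map (Int.castRingHom ℂ)).eval z‖ ≤ norm1 P := by
  rw [eval_map, eval₂_eq_sum_range]
  calc ‖∑ i ∈ Finset.range (P.natDegree + 1), (Int.castRingHom ℂ) (P.coeff i) * z ^ i‖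
      ≤ ∑ i ∈ Finset.range (P.natDegree + 1),
          ‖(Int.castRingHom ℂ) (P.coeff i) * z ^ i‖ := norm_sum_le _ _
    _ = ∑ i ∈ Finset.range (P.natDegree + 1), |(P.coeff i : ℝ)| := by
        refine Finset.sum_congr rfl fun i _ => ?_
        rw [norm_mul, norm_pow, hz, one_pow, mul_one]
        simp [Complex.norm_intCast]
    _ = norm1 P := rfl

lemma mahlerMeasure_le_norm1 (P : Polynomial ℤ) (hP : P ≠ 0) :
    mahlerMeasure P ≤ norm1 P := by
  set Q : Polynomial ℂ := P.map (Int.castRingHom ℂ) with hQdef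
  have hQ : Q ≠ 0 := (Polynomial.map_ne_zero_iff (fun a b h => Int.cast_injective h)).2 hP
  set g : ℂ → Polynomial ℂ :=
    fun z => if 1 < ‖z‖ then C ((starRingEnd ℂ) z) * X + C (-1) else X + C (-z)
    with hgdef
  set f : Polynomial ℂ := C Q.leadingCoeff * (Q.roots.map g).prod with hfdef
  -- leading coefficient of f
  have hlcg : ∀ z : ℂ, (g z).leadingCoeff = if 1 < ‖z‖ then (starRingEnd ℂ) z else 1 := by
    intro z
    simp only [hgdef]
    split_ifs with h
    · refine leadingCoeff_linear ?_
      have hz0 : z ≠ 0 := by rintro rfl; norm_num at h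
      rw [starRingEnd_apply]; exact star_ne_zero.2 hz0
    · exact monic_X_add_C (-z)
  have hlcf : ‖f.leadingCoeff‖ = mahlerMeasure P := by
    rw [hfdef, leadingCoeff_mul, leadingCoeff_C, leadingCoeff_multiset_prod,
      Multiset.map_map, norm_mul, norm_multiset_prod, Multiset.map_map]
    have h1 : ‖Q.leadingCoeff‖ = |(P.leadingCoeff : ℝ)| := by
      rw [hQdef, Polynomial.leadingCoeff_map_of_injective (fun a b h => Int.cast_injective h)]
      simp [Complex.norm_intCast]
    rw [h1, _root_.mahlerMeasure]
    congr 1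
    refine congrArg _ (Multiset.map_congr rfl fun z _ => ?_)
    simp only [Function.comp_apply, hlcg z]
    split_ifs with h
    · rw [Complex.norm_conj]; exact (max_eq_right h.le).symm
    · rw [norm_one]; exact (max_eq_left (not_lt.1 h)).symm
  -- eval equality on the circle
  have hevalf : ∀ w : ℂ, ‖w‖ = 1 →
      ‖f.eval w‖ = ‖Q.eval w‖ := by
    intro w hw
    have hQfact : Q = C Q.leadingCoeff * (Q.roots.map fun a => X - C a).prod :=
      (IsAlgClosed.splits Q).eq_prod_roots
    have hcw : (starRingEnd ℂ) w * w = 1 := by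
      rw [mul_comm, Complex.mul_conj]; norm_cast; rw [← Complex.sq_norm, hw, one_pow]
    conv_rhs => rw [hQfact]
    rw [hfdef, eval_mul, eval_C, eval_mul, eval_C, eval_multiset_prod, eval_multiset_prod,
      Multiset.map_map, Multiset.map_map, norm_mul, norm_mul, norm_multiset_prod,
      norm_multiset_prod, Multiset.map_map, Multiset.map_map]
    congr 1
    refine congrArg _ (Multiset.map_congr rfl fun z _ => ?_)
    simp only [Function.comp_apply, hgdef]
    split_ifs with h
    · have h1 : ((C ((starRingEnd ℂ) z) * X + C (-1)).eval w) = (starRingEnd ℂ) z * w - 1 := by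
        simp; ring
      have h2 : ((X - C z).eval w) = w - z := by simp
      rw [h1, h2]
      have hconj : (starRingEnd ℂ) ((starRingEnd ℂ) z * w - 1) = (starRingEnd ℂ) w * (z - w) := by
        rw [map_sub, map_mul, map_one, starRingEnd_self_apply, mul_sub, hcw]; ring
      calc ‖(starRingEnd ℂ) z * w - 1‖
          = ‖(starRingEnd ℂ) ((starRingEnd ℂ) z * w - 1)‖ := (Complex.norm_conj _).symm
        _ = ‖(starRingEnd ℂ) w‖ * ‖z - w‖ := by rw [hconj, norm_mul]
        _ = ‖w - z‖ := by rw [Complex.norm_conj, hw, one_mul, norm_sub_rev]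
    · simp [sub_eq_add_neg]
  -- conclude
  have hfcoeff : ‖f.coeff f.natDegree‖ ≤ norm1 P := by
    refine dft_coeff_bound f f.natDegree (f.natDegree + 1) (by omega) (by omega) _ ?_
    intro z hz
    rw [hevalf z hz]
    exact eval_circle_le_norm1 P z hz
  rwa [coeff_natDegree, hlcf] at hfcoeff

lemma one_le_mahlerMeasure (p : Polynomial ℤ) (hp : p ≠ 0) : 1 ≤ mahlerMeasure p := by
  have h1 : (1:ℝ) ≤ |(p.leadingCoeff : ℝ)| := by
    have : p.leadingCoeff ≠ 0 := leadingCoeff_ne_zero.2 hp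
    rw [← Int.cast_abs]
    exact_mod_cast Int.one_le_abs this
  have h2 : (1:ℝ) ≤ ((p.map (Int.castRingHom ℂ)).roots.map fun z => max 1 (‖z‖)).prod := by
    refine Multiset.one_le_prod ?_
    intro x hx
    obtain ⟨z, _, rfl⟩ := Multiset.mem_map.1 hx
    exact le_max_left _ _
  have := mul_le_mul h1 h2 zero_le_one (abs_nonneg _)
  simpa [_root_.mahlerMeasure] using this

lemma mahlerMeasure_mul (p q : Polynomial ℤ) (hp : p ≠ 0) (hq : q ≠ 0) :
    mahlerMeasure (p * q) = mahlerMeasure p * mahlerMeasure q := by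
  have hinj : Function.Injective (Int.castRingHom ℂ) := fun a b h => Int.cast_injective h
  have hp' : p.map (Int.castRingHom ℂ) ≠ 0 := (Polynomial.map_ne_zero_iff hinj).2 hp
  have hq' : q.map (Int.castRingHom ℂ) ≠ 0 := (Polynomial.map_ne_zero_iff hinj).2 hq
  unfold _root_.mahlerMeasure
  rw [Polynomial.map_mul, roots_mul (mul_ne_zero hp' hq'), leadingCoeff_mul,
    Multiset.map_add, Multiset.prod_add]
  push_cast
  rw [abs_mul]
  ring

lemma mahlerMeasure_le_of_dvd (p q : Polynomial ℤ) (h : p ∣ q) (hq : q ≠ 0) :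
    mahlerMeasure p ≤ mahlerMeasure q := by
  obtain ⟨r, rfl⟩ := h
  have hp : p ≠ 0 := fun h0 => hq (by simp [h0])
  have hr : r ≠ 0 := fun h0 => hq (by simp [h0])
  rw [mahlerMeasure_mul p r hp hr]
  have h1 : (0:ℝ) ≤ mahlerMeasure p := le_trans zero_le_one (one_le_mahlerMeasure p hp)
  exact le_mul_of_one_le_right h1 (one_le_mahlerMeasure r hr)

lemma intMinpoly_dvd (α : ℂ) (hα : IsAlgebraic ℚ α) (P : Polynomial ℤ)
    (hP : P ≠ 0) (hroot : Polynomial.aeval α P = 0) : intMinpoly α ∣ P := by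
  set n : Polynomial ℤ := IsLocalization.integerNormalization (nonZeroDivisors ℤ) (minpoly ℚ α)
    with hndef
  have hint : IsIntegral ℚ α := hα.isIntegral
  have hprim : (intMinpoly α).IsPrimitive := isPrimitive_primPart n
  -- minpoly divides P over ℚ
  have hPQ : minpoly ℚ α ∣ P.map (algebraMap ℤ ℚ) := by
    refine minpoly.dvd ℚ α ?_
    rw [aeval_map_algebraMap]
    exact hroot
  -- intMinpoly maps-divides minpoly
  obtain ⟨b, hb⟩ := IsLocalization.integerNormalization_map_to_map (nonZeroDivisors ℤ)
    (minpoly ℚ α)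
  have hbne : ((b : ℤ) : ℚ) ≠ 0 := by
    exact_mod_cast nonZeroDivisors.coe_ne_zero b
  have hunit : IsUnit (C ((b : ℤ) : ℚ)) := isUnit_C.2 (isUnit_iff_ne_zero.2 hbne)
  have hdvd1 : (intMinpoly α).map (algebraMap ℤ ℚ) ∣ minpoly ℚ α := by
    have h1 : (intMinpoly α).map (algebraMap ℤ ℚ) ∣ n.map (algebraMap ℤ ℚ) :=
      Polynomial.map_dvd _ (primPart_dvd n)
    rw [hb, zsmul_eq_mul, ← Polynomial.C_eq_intCast] at h1
    exact hunit.dvd_mul_left.1 h1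
  -- conclude with Gauss
  have hdvd2 : (intMinpoly α).map (algebraMap ℤ ℚ) ∣ P.primPart.map (algebraMap ℤ ℚ) := by
    have h3 : P = C P.content * P.primPart := eq_C_content_mul_primPart P
    have h4 : (intMinpoly α).map (algebraMap ℤ ℚ) ∣ P.map (algebraMap ℤ ℚ) :=
      hdvd1.trans hPQ
    rw [h3, Polynomial.map_mul, map_C] at h4
    have hc : IsUnit (C ((algebraMap ℤ ℚ) P.content)) := by
      refine isUnit_C.2 (isUnit_iff_ne_zero.2 ?_)
      simp only [eq_intCast, Int.cast_ne_zero]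
      exact fun hc0 => hP (content_eq_zero_iff.1 hc0)
    exact hc.dvd_mul_left.1 h4
  have h5 : intMinpoly α ∣ P.primPart :=
    hprim.dvd_of_fraction_map_dvd_fraction_map (K := ℚ) hdvd2
  exact h5.trans (primPart_dvd P)

/-- If `α` is an algebraic number that is a root of a nonzero integer polynomial `P`,
then the Mahler measure of `α` is at most `‖P‖₁`. -/
theorem mahlerAlg_le_norm1 (α : ℂ) (hα : IsAlgebraic ℚ α) (P : Polynomial ℤ)
    (hP : P ≠ 0) (hroot : Polynomial.aeval α P = 0) :
    mahlerAlg α ≤ norm1 P := by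
  exact le_trans
    (mahlerMeasure_le_of_dvd _ _ (intMinpoly_dvd α hα P hP hroot) hP)
    (mahlerMeasure_le_norm1 P hP)
end
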